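/- Let μ > 0, A ∈ ℝ^{m×n}, Q = μI + [[0, Aᵀ],[−A, 0]], and G_new = [[−I, I],[0, −Q/μ]]. Then every eigenvalue λ of G_new satisfies (λ+1)(λ+1 ± i√δ/μ) = 0 for some eigenvalue δ of AᵀA; in particular every eigenvalue of G_new has real part equal to −1. -/

import Mathlib

open Matrix

/-- The matrix `Q = μI + [[0, Aᵀ],[−A, 0]]` of the quadratic game. -/
noncomputable def Qgame {n m : ℕ} (μ : ℝ) (A : Matrix (Fin m) (Fin n) ℝ) :
    Matrix (Fin n ⊕ Fin m) (Fin n ⊕ Fin m) ℝ :=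
  μ • (1 : Matrix (Fin n ⊕ Fin m) (Fin n ⊕ Fin m) ℝ) + Matrix.fromBlocks 0 Aᵀ (-A) 0

/-- The velocity-corrected model matrix `G_new = [[−I, I],[0, −Q/μ]]`. -/
noncomputable def Gnew {n m : ℕ} (μ : ℝ) (A : Matrix (Fin m) (Fin n) ℝ) :
    Matrix ((Fin n ⊕ Fin m) ⊕ (Fin n ⊕ Fin m)) ((Fin n ⊕ Fin m) ⊕ (Fin n ⊕ Fin m)) ℝ :=
  Matrix.fromBlocks (-1) 1 0 (-(μ⁻¹ • Qgame μ A))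

lemma mem_spec_iff' {ι : Type*} [Fintype ι] [DecidableEq ι] (M : Matrix ι ι ℂ) (z : ℂ) :
    z ∈ spectrum ℂ M ↔ ∃ v ≠ 0, M *ᵥ v = z • v := by
  rw [spectrum.mem_iff, Matrix.isUnit_iff_isUnit_det, isUnit_iff_ne_zero, not_ne_iff,
    ← Matrix.exists_mulVec_eq_zero_iff]
  have key : ∀ v : ι → ℂ, (algebraMap ℂ (Matrix ι ι ℂ) z - M) *ᵥ v = z • v - M *ᵥ v := by
    intro v
    rw [Algebra.algebraMap_eq_smul_one, Matrix.sub_mulVec, Matrix.smul_mulVec,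
      Matrix.one_mulVec]
  constructor
  · rintro ⟨v, hv, h⟩
    exact ⟨v, hv, by rw [key, sub_eq_zero] at h; exact h.symm⟩
  · rintro ⟨v, hv, h⟩
    exact ⟨v, hv, by rw [key, sub_eq_zero]; exact h.symm⟩

lemma star_dotProduct_eq {ι : Type*} [Fintype ι] (u w : ι → ℂ) :
    star (u ⬝ᵥ w) = star u ⬝ᵥ star w := by
  simp [dotProduct, star_mul']

lemma skew_eig_re {ι : Type*} [Fintype ι] [DecidableEq ι] (K : Matrix ι ι ℂ) (hK : Kᴴ = -K)
    {v : ι → ℂ} (hv : v ≠ 0) {ν : ℂ} (h : K *ᵥ v = ν • v) : ν.re = 0 := by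
  have hr : (star v) ⬝ᵥ v ≠ 0 := by
    intro h0
    apply hv
    funext i
    have hz : ∀ j, Complex.normSq (v j) = 0 := by
      intro j
      have hsum : ∑ j, Complex.normSq (v j) = 0 := by
        have := congrArg Complex.re h0
        simpa [dotProduct, Complex.mul_re, Complex.normSq_apply] using this
      have := Finset.sum_eq_zero_iff_of_nonneg
        (fun j _ => Complex.normSq_nonneg (v j)) |>.mp hsum j (Finset.mem_univ j)
      exact this
    exact Complex.normSq_eq_zero.mp (hz i)
  have hrr : star ((star v) ⬝ᵥ v) = (star v) ⬝ᵥ v := by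
    rw [star_dotProduct_eq, star_star, dotProduct_comm]
  have hc : star ((star v) ⬝ᵥ (K *ᵥ v)) = -((star v) ⬝ᵥ (K *ᵥ v)) := by
    rw [star_dotProduct_eq, star_star, dotProduct_comm, Matrix.star_mulVec, hK,
      ← Matrix.dotProduct_mulVec]
    simp [Matrix.neg_mulVec]
  rw [h] at hc
  have hsm : (star v) ⬝ᵥ (ν • v) = ν * ((star v) ⬝ᵥ v) := by
    simp [smul_eq_mul]
  rw [hsm, star_mul', hrr] at hc
  have hz : (star ν + ν) * ((star v) ⬝ᵥ v) = 0 := by linear_combination hc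
  have h2 : star ν + ν = 0 := by
    rcases mul_eq_zero.mp hz with h' | h'
    · exact h'
    · exact absurd h' hr
  have := congrArg Complex.re h2
  simp only [Complex.add_re, Complex.zero_re, Complex.star_def, Complex.conj_re] at this
  linarith


/-- Every eigenvalue `λ` of `G_new` satisfies `(λ+1)(λ+1 ± i√δ/μ) = 0` for some
eigenvalue `δ` of `AᵀA` (allowing `δ = 0`); in particular every eigenvalue of
`G_new` has real part `−1`. -/
theorem eigenvalues_Gnew {n m : ℕ} (μ : ℝ) (hμ : 0 < μ)
    (A : Matrix (Fin m) (Fin n) ℝ) :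
    ∀ lam ∈ spectrum ℂ ((Gnew μ A).map Complex.ofReal),
      (∃ δ : ℝ, 0 ≤ δ ∧
        (δ = 0 ∨ (δ : ℂ) ∈ spectrum ℂ ((Aᵀ * A).map Complex.ofReal)) ∧
        ((lam + 1) * (lam + 1 + Complex.I * ((Real.sqrt δ / μ : ℝ) : ℂ)) = 0 ∨
         (lam + 1) * (lam + 1 - Complex.I * ((Real.sqrt δ / μ : ℝ) : ℂ)) = 0)) ∧
      lam.re = -1 := by
  intro lam hlam
  set A' : Matrix (Fin m) (Fin n) ℂ := A.map Complex.ofReal with hA'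
  set K : Matrix (Fin n ⊕ Fin m) (Fin n ⊕ Fin m) ℂ := Matrix.fromBlocks 0 A'ᵀ (-A') 0 with hKdef
  have hμ' : (μ : ℂ) ≠ 0 := by exact_mod_cast ne_of_gt hμ
  have hG : (Gnew μ A).map Complex.ofReal =
      Matrix.fromBlocks (-1) 1 0 (-(((μ:ℂ))⁻¹ • ((μ:ℂ) • 1 + K))) := by
    ext (⟨i|i⟩|⟨i|i⟩) (⟨j|j⟩|⟨j|j⟩) <;>
      simp [Gnew, Qgame, Matrix.one_apply, Matrix.map_apply, apply_ite Complex.ofReal,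
        mul_add, mul_ite, hA', hKdef]
  have hshift : lam • (1 : Matrix _ _ ℂ) - (Gnew μ A).map Complex.ofReal =
      Matrix.fromBlocks ((lam + 1) • 1) (-1) 0 ((lam + 1) • 1 + ((μ:ℂ))⁻¹ • K) := by
    rw [hG]
    ext (i|i) (j|j) <;>
      simp only [Matrix.sub_apply, Matrix.add_apply, Matrix.smul_apply, Matrix.neg_apply,
        Matrix.fromBlocks_apply₁₁, Matrix.fromBlocks_apply₁₂, Matrix.fromBlocks_apply₂₁,
        Matrix.fromBlocks_apply₂₂, Matrix.one_apply, Matrix.zero_apply, smul_eq_mul,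
        sub_neg_eq_add, mul_ite, mul_one, mul_zero, Sum.inl.injEq, Sum.inr.injEq] <;>
      split_ifs <;>
      first
        | rfl
        | contradiction
        | (field_simp; try ring)
  have hdet0 : (lam • (1 : Matrix _ _ ℂ) - (Gnew μ A).map Complex.ofReal).det = 0 := by
    rw [spectrum.mem_iff, Matrix.isUnit_iff_isUnit_det, isUnit_iff_ne_zero, not_ne_iff,
      Algebra.algebraMap_eq_smul_one] at hlam
    exact hlam
  rw [hshift, Matrix.det_fromBlocks_zero₂₁, Matrix.det_smul, Matrix.det_one, mul_one] at hdet0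
  rcases mul_eq_zero.mp hdet0 with h1 | h2
  · -- lam = -1
    have hlam1 : lam + 1 = 0 := by
      by_cases hcard : Fintype.card (Fin n ⊕ Fin m) = 0
      · rw [hcard, pow_zero] at h1
        exact absurd h1 one_ne_zero
      · exact (pow_eq_zero_iff hcard).mp h1
    refine ⟨⟨0, le_refl 0, Or.inl rfl, Or.inl (by rw [hlam1, zero_mul])⟩, ?_⟩
    have := congrArg Complex.re hlam1
    simp only [Complex.add_re, Complex.one_re, Complex.zero_re] at this
    linarith
  · -- eigenvector case
    obtain ⟨v, hv0, hveq⟩ := Matrix.exists_mulVec_eq_zero_iff.mpr h2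
    set ν : ℂ := -((μ:ℂ) * (lam + 1)) with hνdef
    have hKv : K *ᵥ v = ν • v := by
      rw [Matrix.add_mulVec, Matrix.smul_mulVec, Matrix.one_mulVec,
        Matrix.smul_mulVec] at hveq
      have h3 : ((μ:ℂ))⁻¹ • (K *ᵥ v) = -((lam + 1) • v) :=
        eq_neg_of_add_eq_zero_right hveq
      funext i
      have h4 := congrFun h3 i
      simp only [Pi.smul_apply, Pi.neg_apply, smul_eq_mul] at h4
      simp only [Pi.smul_apply, smul_eq_mul, hνdef]
      have h5 : (K *ᵥ v) i = (μ:ℂ) * ((μ:ℂ)⁻¹ * (K *ᵥ v) i) := by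
        rw [← mul_assoc, mul_inv_cancel₀ hμ', one_mul]
      rw [h5, h4]
      ring
    have hKH : Kᴴ = -K := by
      ext (i|i) (j|j) <;>
        simp [hKdef, Matrix.conjTranspose_apply, hA', Matrix.map_apply, Complex.conj_ofReal]
    have hνre : ν.re = 0 := skew_eig_re K hKH hv0 hKv
    have hlamre : lam.re = -1 := by
      have : ν.re = -(μ * (lam.re + 1)) := by
        rw [hνdef]
        simp [Complex.mul_re]
      rw [hνre] at this
      have hμne : μ ≠ 0 := ne_of_gt hμ
      nlinarith [this]
    refine ⟨?_, hlamre⟩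
    -- the squared equation
    set δ : ℝ := ν.im ^ 2 with hδdef
    have hνim : ν = (ν.im : ℂ) * Complex.I := by
      have := Complex.re_add_im ν
      rw [hνre] at this
      simpa using this.symm
    have hν2 : ν ^ 2 = -((δ : ℝ) : ℂ) := by
      have hI := Complex.I_sq
      push_cast [hδdef]
      linear_combination (ν + (ν.im : ℂ) * Complex.I) * hνim + ((ν.im : ℂ) ^ 2) * hI
    have hKK : K * K = Matrix.fromBlocks (-(A'ᵀ * A')) 0 0 (-(A' * A'ᵀ)) := by
      rw [hKdef, Matrix.fromBlocks_multiply]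
      simp [Matrix.mul_neg, Matrix.neg_mul]
    have hKvv : (K * K) *ᵥ v = (ν ^ 2) • v := by
      rw [← Matrix.mulVec_mulVec, hKv, Matrix.mulVec_smul, hKv, smul_smul, sq]
    rw [hKK, Matrix.fromBlocks_mulVec] at hKvv
    simp only [Matrix.zero_mulVec, add_zero, zero_add] at hKvv
    have h11 : (A'ᵀ * A') *ᵥ (v ∘ Sum.inl) = ((δ : ℝ) : ℂ) • (v ∘ Sum.inl) := by
      funext i
      have := congrFun hKvv (Sum.inl i)
      simp only [Sum.elim_inl, Pi.smul_apply, smul_eq_mul, Matrix.neg_mulVec, Pi.neg_apply,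
        hν2, neg_mul] at this
      simpa using (neg_injective this)
    have h22 : (A' * A'ᵀ) *ᵥ (v ∘ Sum.inr) = ((δ : ℝ) : ℂ) • (v ∘ Sum.inr) := by
      funext i
      have := congrFun hKvv (Sum.inr i)
      simp only [Sum.elim_inr, Pi.smul_apply, smul_eq_mul, Matrix.neg_mulVec, Pi.neg_apply,
        hν2, neg_mul] at this
      simpa using (neg_injective this)
    have hmapAA : (Aᵀ * A).map Complex.ofReal = A'ᵀ * A' := by
      ext i j
      simp [Matrix.mul_apply, Matrix.map_apply, hA']
    have hδnn : (0:ℝ) ≤ δ := sq_nonneg _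
    have hsqrtδ : Real.sqrt δ = |ν.im| := by
      rw [hδdef, Real.sqrt_sq_eq_abs]
    have hlam1 : lam + 1 = -(ν / (μ:ℂ)) := by
      rw [hνdef]
      field_simp
    -- the factor equation
    have hfact : (lam + 1) * (lam + 1 + Complex.I * ((Real.sqrt δ / μ : ℝ) : ℂ)) = 0 ∨
        (lam + 1) * (lam + 1 - Complex.I * ((Real.sqrt δ / μ : ℝ) : ℂ)) = 0 := by
      rcases le_or_gt 0 ν.im with him | him
      · left
        apply mul_eq_zero_of_right
        rw [hlam1, hsqrtδ, abs_of_nonneg him, hνim]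
        push_cast
        field_simp
        simp only [Complex.mul_im, Complex.I_re, Complex.I_im, Complex.ofReal_re, Complex.ofReal_im,
          zero_mul, one_mul, mul_zero, zero_add, add_zero]
        ring
      · right
        apply mul_eq_zero_of_right
        rw [hlam1, hsqrtδ, abs_of_neg him, hνim]
        push_cast
        field_simp
        simp only [Complex.mul_im, Complex.I_re, Complex.I_im, Complex.ofReal_re, Complex.ofReal_im,
          zero_mul, one_mul, mul_zero, zero_add, add_zero]
        ring
    -- spectrum membership
    rcases eq_or_ne δ 0 with hδ0 | hδ0
    · exact ⟨δ, hδnn, Or.inl hδ0, hfact⟩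
    · have hδspec : ((δ : ℝ) : ℂ) ∈ spectrum ℂ ((Aᵀ * A).map Complex.ofReal) := by
        rw [hmapAA, mem_spec_iff']
        have hδℂ : ((δ : ℝ) : ℂ) ≠ 0 := by exact_mod_cast hδ0
        have hv12 : (v ∘ Sum.inl) ≠ 0 ∨ (v ∘ Sum.inr) ≠ 0 := by
          by_contra hcon
          push_neg at hcon
          apply hv0
          funext i
          rcases i with i | i
          · exact congrFun hcon.1 i
          · exact congrFun hcon.2 i
        rcases hv12 with hne | hne
        · exact ⟨v ∘ Sum.inl, hne, h11⟩
        · refine ⟨A'ᵀ *ᵥ (v ∘ Sum.inr), ?_, ?_⟩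
          · intro hu
            have : (A' * A'ᵀ) *ᵥ (v ∘ Sum.inr) = 0 := by
              rw [← Matrix.mulVec_mulVec, hu, Matrix.mulVec_zero]
            rw [h22] at this
            exact hne (by
              have := smul_eq_zero.mp this
              rcases this with h' | h'
              · exact absurd h' hδℂ
              · exact h')
          · have hAAu : A' *ᵥ (A'ᵀ *ᵥ (v ∘ Sum.inr)) = ((δ : ℝ) : ℂ) • (v ∘ Sum.inr) := by
              rw [Matrix.mulVec_mulVec, h22]
            rw [← Matrix.mulVec_mulVec, hAAu, Matrix.mulVec_smul]
      exact ⟨δ, hδnn, Or.inr hδspec, hfact⟩
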